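/- arXiv:2209.13253 — 2 statements merged into one kernel-verified Lean document; each statement's English description precedes it below -/
import Mathlib

section
/- Let X = ℕ with the cofinite topology. Then the convergence class S_X is topological (it coincides with convergence in the discrete topology on ℕ), but X is not a directed space. -/
namespace Conv

variable {X : Type}

/-- A directed preorder (index of a net), given as an explicit relation. -/
def DirIdx {I : Type} (r : I → I → Prop) : Prop :=
  Nonempty I ∧ (∀ i, r i i) ∧ (∀ a b c : I, r a b → r b c → r a c) ∧
    ∀ a b : I, ∃ c, r a c ∧ r b c

/-- Specialization order relative to a family `T` of "open" sets. -/
def sle (T : Set (Set X)) (x y : X) : Prop := ∀ U ∈ T, x ∈ U → y ∈ U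

/-- Upper closure of a set w.r.t. the specialization order of `T`. -/
def upset (T : Set (Set X)) (A : Set X) : Set X := {z | ∃ a ∈ A, sle T a z}

/-- `D` is a (nonempty) directed subset w.r.t. the specialization order of `T`. -/
def IsDirSet (T : Set (Set X)) (D : Set X) : Prop := D.Nonempty ∧ DirectedOn (sle T) D

/-- A subset `D` (viewed as a monotone net) converges to `x` w.r.t. `T`. -/
def DConv (T : Set (Set X)) (D : Set X) (x : X) : Prop :=
  ∀ U ∈ T, x ∈ U → (D ∩ U).Nonempty

/-- `U` is directed-open w.r.t. `T`. -/
def DirOpen (T : Set (Set X)) (U : Set X) : Prop :=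
  ∀ D x, IsDirSet T D → DConv T D x → x ∈ U → (D ∩ U).Nonempty

/-- The family of directed-open sets. -/
def DTop (T : Set (Set X)) : Set (Set X) := {U | DirOpen T U}

/-- The family of open sets of a topological space. -/
def opens (X : Type) [TopologicalSpace X] : Set (Set X) := {U | IsOpen U}

/-- Every directed-open set belongs to `T`. -/
def DirT (T : Set (Set X)) : Prop := ∀ U, DirOpen T U → U ∈ T

/-- A directed space: every directed-open set is open. -/
def IsDirectedSpace (X : Type) [TopologicalSpace X] : Prop := DirT (opens X)

/-- A net is eventually in `U`. -/
def EvIn {I : Type} (r : I → I → Prop) (xi : I → X) (U : Set X) : Prop :=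
  ∃ k, ∀ i, r k i → xi i ∈ U

/-- `y` is an eventual lower bound of the net `xi`. -/
def EvLB (T : Set (Set X)) {I : Type} (r : I → I → Prop) (xi : I → X) (y : X) : Prop :=
  ∃ k, ∀ i, r k i → sle T y (xi i)

/-- Topological convergence of a net w.r.t. the family `T` of open sets. -/
def NConv (T : Set (Set X)) {I : Type} (r : I → I → Prop) (xi : I → X) (x : X) : Prop :=
  ∀ U ∈ T, x ∈ U → EvIn r xi U

/-- `((x_i), x) ∈ S_X`: some directed set of eventual lower bounds converges to `x`. -/
def SConv (T : Set (Set X)) {I : Type} (r : I → I → Prop) (xi : I → X) (x : X) : Prop :=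
  ∃ D : Set X, IsDirSet T D ∧ (∀ d ∈ D, EvLB T r xi d) ∧ DConv T D x

/-- `U` is open in the topology determined by `S_X`. -/
def SOpen (T : Set (Set X)) (U : Set X) : Prop :=
  ∀ (I : Type) (r : I → I → Prop), DirIdx r → ∀ (xi : I → X) (x : X),
    SConv T r xi x → x ∈ U → EvIn r xi U

/-- `y ≪_d x`. -/
def WayBelow (T : Set (Set X)) (y x : X) : Prop :=
  ∀ D : Set X, IsDirSet T D → DConv T D x → ∃ d ∈ D, sle T y d

/-- A continuous space (relative to the family `T`). -/
def IsContinuousT (T : Set (Set X)) : Prop :=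
  DirT T ∧ ∀ x : X, IsDirSet T {y | WayBelow T y x} ∧ DConv T {y | WayBelow T y x} x

def IsContinuousSpace (X : Type) [TopologicalSpace X] : Prop := IsContinuousT (opens X)

/-- `G ≪_d H` for subsets. -/
def SWayBelow (T : Set (Set X)) (G H : Set X) : Prop :=
  ∀ (D : Set X) (x : X), IsDirSet T D → DConv T D x → x ∈ H → (D ∩ upset T G).Nonempty

/-- A directed family of finite sets (ordered by reverse inclusion of upper closures). -/
def IsDirFam (T : Set (Set X)) (F : Set (Set X)) : Prop :=
  F.Nonempty ∧ (∀ A ∈ F, A.Finite) ∧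
    ∀ A ∈ F, ∀ B ∈ F, ∃ C ∈ F, upset T C ⊆ upset T A ∧ upset T C ⊆ upset T B

/-- Convergence of a family of finite sets to `x`. -/
def FamConv (T : Set (Set X)) (F : Set (Set X)) (x : X) : Prop :=
  ∀ U ∈ T, x ∈ U → ∃ A ∈ F, upset T A ⊆ U

/-- `fin_d(x)`. -/
def finD (T : Set (Set X)) (x : X) : Set (Set X) := {A | A.Finite ∧ SWayBelow T A {x}}

def IsQuasicontinuousT (T : Set (Set X)) : Prop :=
  DirT T ∧ ∀ x : X, IsDirFam T (finD T x) ∧ FamConv T (finD T x) x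

def IsQuasicontinuousSpace (X : Type) [TopologicalSpace X] : Prop :=
  IsQuasicontinuousT (opens X)

/-- `A` is a quasi eventual lower bound of the net `xi`. -/
def QEvLB (T : Set (Set X)) {I : Type} (r : I → I → Prop) (xi : I → X) (A : Set X) : Prop :=
  A.Finite ∧ ∃ k, ∀ i, r k i → xi i ∈ upset T A

/-- `((x_i), x) ∈ S*_X`. -/
def QSConv (T : Set (Set X)) {I : Type} (r : I → I → Prop) (xi : I → X) (x : X) : Prop :=
  ∃ F : Set (Set X), IsDirFam T F ∧ (∀ A ∈ F, QEvLB T r xi A) ∧ FamConv T F x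

/-- `U` is open in the topology determined by `S*_X`. -/
def QSOpen (T : Set (Set X)) (U : Set X) : Prop :=
  ∀ (I : Type) (r : I → I → Prop), DirIdx r → ∀ (xi : I → X) (x : X),
    QSConv T r xi x → x ∈ U → EvIn r xi U

/-- `x ≡ liminf x_i`. -/
def IsLiminf (T : Set (Set X)) {I : Type} (r : I → I → Prop) (xi : I → X) (x : X) : Prop :=
  (∀ y, EvLB T r xi y → sle T y x) ∧
  (∀ z, (∀ y, EvLB T r xi y → sle T y z) → sle T x z) ∧
  SConv T r xi x

/-- `f : (J,s) → (I,r)` is a subnet map: monotone and cofinal, with directed domain. -/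
def Subnet {I J : Type} (r : I → I → Prop) (s : J → J → Prop) (f : J → I) : Prop :=
  DirIdx s ∧ (∀ a b, s a b → r (f a) (f b)) ∧ ∀ i, ∃ j, r i (f j)

/-- `z` is a cofinal lower bound of the net `xi`. -/
def CofLB (T : Set (Set X)) {I : Type} (r : I → I → Prop) (xi : I → X) (z : X) : Prop :=
  ∀ i, ∃ j, r i j ∧ sle T z (xi j)

/-- `((x_i), x) ∈ L_X`: every subnet has liminf `x`. -/
def LConv (T : Set (Set X)) {I : Type} (r : I → I → Prop) (xi : I → X) (x : X) : Prop :=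
  ∀ (J : Type) (s : J → J → Prop) (f : J → I), Subnet r s f →
    IsLiminf T s (fun j => xi (f j)) x

/-- `U` is open in the liminf topology `L(X)`. -/
def LOpen (T : Set (Set X)) (U : Set X) : Prop :=
  ∀ (I : Type) (r : I → I → Prop), DirIdx r → ∀ (xi : I → X) (x : X),
    LConv T r xi x → x ∈ U → EvIn r xi U

/-- `x ≡_q liminf x_i`. -/
def QLiminf (T : Set (Set X)) {I : Type} (r : I → I → Prop) (xi : I → X) (x : X) : Prop :=
  QSConv T r xi x ∧ ∀ y, EvLB T r xi y → sle T y x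

/-- `((x_i), x) ∈ L*_X`: every subnet quasi-liminf converges to `x`. -/
def QLConv (T : Set (Set X)) {I : Type} (r : I → I → Prop) (xi : I → X) (x : X) : Prop :=
  ∀ (J : Type) (s : J → J → Prop) (f : J → I), Subnet r s f →
    QLiminf T s (fun j => xi (f j)) x

/-- `U` is open in the quasi-liminf topology `L*(X)`. -/
def QLOpen (T : Set (Set X)) (U : Set X) : Prop :=
  ∀ (I : Type) (r : I → I → Prop), DirIdx r → ∀ (xi : I → X) (x : X),
    QLConv T r xi x → x ∈ U → EvIn r xi U

/-- The Lawson topology: generated by the opens of `X` and complements of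
principal upper sets. -/
def lawson (X : Type) [TopologicalSpace X] : Set (Set X) :=
  {U | (TopologicalSpace.generateFrom
      (opens X ∪ {V | ∃ y : X, V = {z : X | sle (opens X) y z}ᶜ})).IsOpen U}

lemma cof_sle_eq {x y : CofiniteTopology ℕ}
    (h : sle (opens (CofiniteTopology ℕ)) x y) : x = y := by
  by_contra hne
  have hU : IsOpen ({y}ᶜ : Set (CofiniteTopology ℕ)) := by
    rw [CofiniteTopology.isOpen_iff]; intro _; simp
  exact (h _ hU (by simpa using hne)) rfl

lemma sle_refl (T : Set (Set X)) (x : X) : sle T x x := fun _ _ h => h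

lemma cof_dconv_singleton {d x : CofiniteTopology ℕ}
    (h : DConv (opens (CofiniteTopology ℕ)) {d} x) : d = x := by
  by_contra hne
  have hU : IsOpen ({d}ᶜ : Set (CofiniteTopology ℕ)) := by
    rw [CofiniteTopology.isOpen_iff]; intro _; simp
  obtain ⟨z, hz1, hz2⟩ := h _ hU (by simpa using fun hx => hne hx.symm)
  exact hz2 hz1

lemma cof_dir_singleton {D : Set (CofiniteTopology ℕ)}
    (h : IsDirSet (opens (CofiniteTopology ℕ)) D) : ∃ d, D = {d} := by
  obtain ⟨⟨d, hd⟩, hdir⟩ := h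
  refine ⟨d, Set.eq_singleton_iff_unique_mem.2 ⟨hd, fun b hb => ?_⟩⟩
  obtain ⟨c, _, hbc, hdc⟩ := hdir b hb d hd
  exact (cof_sle_eq hbc).trans (cof_sle_eq hdc).symm

lemma cof_sconv_iff {I : Type} (r : I → I → Prop) (xi : I → CofiniteTopology ℕ)
    (x : CofiniteTopology ℕ) :
    SConv (opens (CofiniteTopology ℕ)) r xi x ↔ ∃ k, ∀ i, r k i → xi i = x := by
  constructor
  · rintro ⟨D, hD, hlb, hconv⟩
    obtain ⟨d, rfl⟩ := cof_dir_singleton hD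
    have hdx : d = x := cof_dconv_singleton hconv
    obtain ⟨k, hk⟩ := hlb d rfl
    exact ⟨k, fun i hi => (cof_sle_eq (hk i hi)).symm.trans hdx⟩
  · rintro ⟨k, hk⟩
    refine ⟨{x}, ⟨⟨x, rfl⟩, fun a ha b hb => ⟨x, rfl, ?_, ?_⟩⟩, ?_, ?_⟩
    · cases ha; exact sle_refl _ _
    · cases hb; exact sle_refl _ _
    · rintro d rfl
      exact ⟨k, fun i hi => by rw [hk i hi]; exact sle_refl _ _⟩
    · intro U _ hx; exact ⟨x, rfl, hx⟩

theorem stmt9 :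
    (∀ (I : Type) (r : I → I → Prop), DirIdx r →
      ∀ (xi : I → CofiniteTopology ℕ) (x : CofiniteTopology ℕ),
        SConv (opens (CofiniteTopology ℕ)) r xi x ↔
          (∃ k, ∀ i, r k i → xi i = x)) ∧
    (∀ (I : Type) (r : I → I → Prop), DirIdx r →
      ∀ (xi : I → CofiniteTopology ℕ) (x : CofiniteTopology ℕ),
        SConv (opens (CofiniteTopology ℕ)) r xi x ↔
          NConv {U | SOpen (opens (CofiniteTopology ℕ)) U} r xi x) ∧
    ¬ IsDirectedSpace (CofiniteTopology ℕ) := by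
  refine ⟨fun I r _ xi x => cof_sconv_iff r xi x, fun I r _ xi x => ?_, ?_⟩
  · constructor
    · intro hS U hU hx
      obtain ⟨k, hk⟩ := (cof_sconv_iff r xi x).1 hS
      exact ⟨k, fun i hi => by rw [hk i hi]; exact hx⟩
    · intro hN
      have hSopen : SOpen (opens (CofiniteTopology ℕ)) ({x} : Set (CofiniteTopology ℕ)) := by
        intro J s _ yj y hS hy
        obtain ⟨k, hk⟩ := (cof_sconv_iff s yj y).1 hS
        exact ⟨k, fun j hj => by rw [hk j hj]; exact hy⟩
      obtain ⟨k, hk⟩ := hN _ hSopen rfl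
      exact (cof_sconv_iff r xi x).2 ⟨k, fun i hi => hk i hi⟩
  · intro hdir
    set z : CofiniteTopology ℕ := CofiniteTopology.of 0 with hz
    have h0 : DirOpen (opens (CofiniteTopology ℕ)) ({z} : Set (CofiniteTopology ℕ)) := by
      intro D x hD hconv hx
      obtain ⟨d, rfl⟩ := cof_dir_singleton hD
      have hdx := cof_dconv_singleton hconv
      exact ⟨d, rfl, by rw [hdx]; exact hx⟩
    have hopen : IsOpen ({z} : Set (CofiniteTopology ℕ)) := hdir _ h0
    rw [CofiniteTopology.isOpen_iff] at hopen
    have hfin : ({z}ᶜ : Set (CofiniteTopology ℕ)).Finite := hopen ⟨z, rfl⟩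
    have : Infinite (CofiniteTopology ℕ) := Infinite.of_injective _ CofiniteTopology.of.injective
    exact (Set.Finite.infinite_compl (Set.finite_singleton z)) hfin

end Conv
end

section
/- Let X be a quasicontinuous space (locally hypercompact directed space). For finite subsets G of X, the sets ⇑G = int(↑G) form a base of the topology of X, and for subsets G, H ⊆ X, G ≪_d H if and only if H ⊆ int(↑G). -/
namespace Conv

variable {X : Type}

lemma sle_trans {T : Set (Set X)} {x y z : X} (h1 : sle T x y) (h2 : sle T y z) :
    sle T x z := fun U hU hx => h2 U hU (h1 U hU hx)

lemma mem_upset_trans {T : Set (Set X)} {A : Set X} {a b : X}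
    (ha : a ∈ upset T A) (h : sle T a b) : b ∈ upset T A := by
  obtain ⟨c, hc, hca⟩ := ha; exact ⟨c, hc, sle_trans hca h⟩

lemma subset_upset (T : Set (Set X)) (A : Set X) : A ⊆ upset T A :=
  fun a ha => ⟨a, ha, sle_refl T a⟩

/-- min of finite subset of a chain -/
lemma finchain_min {c : Set (Set X)} (hc : IsChain (· ⊆ ·) c)
    {s : Set (Set X)} (hsc : s ⊆ c) (hfin : s.Finite) (hne : s.Nonempty) :
    ∃ M ∈ s, ∀ N ∈ s, M ⊆ N := by
  obtain ⟨M, hM, hmin⟩ := Set.Finite.exists_minimalFor id s hfin hne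
  refine ⟨M, hM, fun N hN => ?_⟩
  rcases eq_or_ne M N with rfl | hMN
  · exact subset_rfl
  · rcases hc (hsc hM) (hsc hN) hMN with h | h
    · exact h
    · exact hmin hN h

/-- Rudin's lemma (topological / preorder version). -/
lemma rudin (T : Set (Set X)) (H : Set (Set X)) (hne : H.Nonempty)
    (hfin : ∀ A ∈ H, A.Finite) (hA : ∀ A ∈ H, A.Nonempty)
    (hdir : ∀ A ∈ H, ∀ B ∈ H, ∃ C ∈ H, upset T C ⊆ upset T A ∧ upset T C ⊆ upset T B) :
    ∃ M : Set X, M.Nonempty ∧ DirectedOn (sle T) M ∧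
      (∀ A ∈ H, (M ∩ A).Nonempty) ∧ M ⊆ ⋃₀ H := by
  classical
  set S : Set (Set X) := {M | M ⊆ ⋃₀ H ∧ (∀ A ∈ H, (M ∩ A).Nonempty) ∧
    ∀ A ∈ H, ∀ m ∈ M, m ∈ upset T A → ∃ u ∈ M ∩ A, sle T u m} with hS
  have hUS : ⋃₀ H ∈ S := by
    refine ⟨subset_rfl, fun A hAH => ?_, fun A hAH m _ hm => ?_⟩
    · obtain ⟨a, ha⟩ := hA A hAH
      exact ⟨a, ⟨A, hAH, ha⟩, ha⟩
    · obtain ⟨u, hu, hum⟩ := hm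
      exact ⟨u, ⟨⟨A, hAH, hu⟩, hu⟩, hum⟩
  have hzorn : ∃ m, Minimal (· ∈ S) m := by
    apply zorn_superset
    intro c hcS hchain
    rcases c.eq_empty_or_nonempty with rfl | hcne
    · exact ⟨⋃₀ H, hUS, by simp⟩
    refine ⟨⋂₀ c, ?_, fun s hs => Set.sInter_subset_of_mem hs⟩
    obtain ⟨M0, hM0c⟩ := hcne
    constructor
    · exact (Set.sInter_subset_of_mem hM0c).trans (hcS hM0c).1
    constructor
    · -- meets every A
      intro A hAH
      by_contra hempty
      rw [Set.not_nonempty_iff_eq_empty] at hempty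
      -- for each a ∈ A, pick M ∈ c with a ∉ M
      have hpick : ∀ a ∈ A, ∃ M ∈ c, a ∉ M := by
        intro a haA
        by_contra hcon
        push_neg at hcon
        have : a ∈ ⋂₀ c ∩ A := ⟨fun M hM => hcon M hM, haA⟩
        simp [hempty] at this
      choose f hf1 hf2 using hpick
      set s : Set (Set X) := {M | ∃ a, ∃ haA : a ∈ A, f a haA = M} with hs
      have hsc : s ⊆ c := by rintro M ⟨a, haA, rfl⟩; exact hf1 a haA
      have hsfin : s.Finite := (hfin A hAH).dependent_image f
      have hsne : s.Nonempty := by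
        obtain ⟨a, haA⟩ := hA A hAH
        exact ⟨f a haA, a, haA, rfl⟩
      obtain ⟨M, hMs, hMmin⟩ := finchain_min hchain hsc hsfin hsne
      obtain ⟨x, hxM, hxA⟩ := (hcS (hsc hMs)).2.1 A hAH
      exact hf2 x hxA (hMmin (f x hxA) ⟨x, hxA, rfl⟩ hxM)
    · -- relative lower-bound property
      intro A hAH m hm hup
      by_contra hcon
      push_neg at hcon
      -- every u ∈ A with sle u m fails to be in ⋂₀ c
      have hpick : ∀ u ∈ A, sle T u m → ∃ M ∈ c, u ∉ M := by
        intro u huA hsle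
        by_contra hc2
        push_neg at hc2
        exact hcon u ⟨fun M hM => hc2 M hM, huA⟩ hsle
      set A' : Set X := {u ∈ A | sle T u m} with hA'
      have hpick' : ∀ u ∈ A', ∃ M ∈ c, u ∉ M := fun u hu => hpick u hu.1 hu.2
      choose f hf1 hf2 using hpick'
      set s : Set (Set X) := insert M0 {M | ∃ u, ∃ hu : u ∈ A', f u hu = M} with hs
      have hsc : s ⊆ c := by
        rintro M (rfl | ⟨u, hu, rfl⟩)
        · exact hM0c
        · exact hf1 u hu
      have hsfin : s.Finite :=
        Set.Finite.insert _ (((hfin A hAH).subset (fun u hu => hu.1)).dependent_image f)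
      obtain ⟨M, hMs, hMmin⟩ := finchain_min hchain hsc hsfin ⟨M0, Set.mem_insert _ _⟩
      have hmM : m ∈ M := hm M (hsc hMs)
      obtain ⟨u, ⟨huM, huA⟩, hum⟩ := (hcS (hsc hMs)).2.2 A hAH m hmM hup
      have huA' : u ∈ A' := ⟨huA, hum⟩
      exact hf2 u huA' (hMmin (f u huA') (Set.mem_insert_of_mem _ ⟨u, huA', rfl⟩) huM)
  obtain ⟨M, hMmin⟩ := hzorn
  obtain ⟨hMsub, hMmeet, hMlb⟩ := hMmin.prop
  -- Claim: for every a ∈ M there is A ∈ H with M ∩ A ⊆ ↑a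
  have claim : ∀ a ∈ M, ∃ A ∈ H, ∀ u ∈ M ∩ A, sle T a u := by
    intro a haM
    by_contra hcon
    push_neg at hcon
    set N : Set X := {m ∈ M | ¬ sle T a m} with hN
    have hNS : N ∈ S := by
      refine ⟨(fun m hm => hMsub hm.1), fun A hAH => ?_, fun A hAH m hm hup => ?_⟩
      · obtain ⟨u, hu, hau⟩ := hcon A hAH
        exact ⟨u, ⟨hu.1, hau⟩, hu.2⟩
      · obtain ⟨u, ⟨huM, huA⟩, hum⟩ := hMlb A hAH m hm.1 hup
        refine ⟨u, ⟨⟨huM, fun hau => hm.2 (sle_trans hau hum)⟩, huA⟩, hum⟩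
    have : N = M := Minimal.eq_of_subset hMmin hNS (fun m hm => hm.1)
    have : a ∈ N := this ▸ haM
    exact this.2 (sle_refl T a)
  have hMne : M.Nonempty := by
    obtain ⟨A, hAH⟩ := hne
    obtain ⟨x, hx, _⟩ := hMmeet A hAH
    exact ⟨x, hx⟩
  refine ⟨M, hMne, ?_, hMmeet, hMsub⟩
  intro a haM b hbM
  obtain ⟨A, hAH, hAa⟩ := claim a haM
  obtain ⟨B, hBH, hBb⟩ := claim b hbM
  obtain ⟨C, hCH, hCA, hCB⟩ := hdir A hAH B hBH
  obtain ⟨z, hzM, hzC⟩ := hMmeet C hCH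
  have hzup : z ∈ upset T C := subset_upset T C hzC
  obtain ⟨u, huMA, huz⟩ := hMlb A hAH z hzM (hCA hzup)
  obtain ⟨v, hvMB, hvz⟩ := hMlb B hBH z hzM (hCB hzup)
  exact ⟨z, hzM, sle_trans (hAa u huMA) huz, sle_trans (hBb v hvMB) hvz⟩


lemma finD_mono {T : Set (Set X)} {d d' : X} (h : sle T d d') :
    finD T d ⊆ finD T d' := by
  rintro C ⟨hCfin, hC⟩
  refine ⟨hCfin, fun E x hE hconv hx => ?_⟩
  have hx' : x = d' := hx
  subst hx'
  exact hC E d hE (fun U hU hdU => hconv U hU (h U hU hdU)) rfl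

lemma diff_upset_mono {T : Set (Set X)} {G A B : Set X}
    (h : upset T B ⊆ upset T A) :
    upset T (B \ upset T G) ⊆ upset T (A \ upset T G) := by
  rintro w ⟨b, ⟨hbB, hbG⟩, hbw⟩
  obtain ⟨a, haA, hab⟩ := h (subset_upset T B hbB)
  exact ⟨a, ⟨haA, fun haG => hbG (mem_upset_trans haG hab)⟩, sle_trans hab hbw⟩

/-- Key lemma: if `D` is directed converging to `z` and `G ≪_d z`, then some `d ∈ D`
admits a finite `C ≪_d d` with `C ⊆ ↑G`. -/
lemma keyL {T : Set (Set X)}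
    (hq : ∀ x : X, IsDirFam T (finD T x) ∧ FamConv T (finD T x) x)
    {D : Set X} {z : X} (hD : IsDirSet T D) (hDz : DConv T D z)
    {G : Set X} (hG : SWayBelow T G {z}) :
    ∃ d ∈ D, ∃ C, C ∈ finD T d ∧ C ⊆ upset T G := by
  by_contra hbad
  push_neg at hbad
  set Hfam : Set (Set X) := {A | ∃ d ∈ D, ∃ C ∈ finD T d, A = C \ upset T G} with hHfam
  have hne : Hfam.Nonempty := by
    obtain ⟨d, hd⟩ := hD.1
    obtain ⟨C, hC⟩ := (hq d).1.1
    exact ⟨C \ upset T G, d, hd, C, hC, rfl⟩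
  have hfin : ∀ A ∈ Hfam, A.Finite := by
    rintro A ⟨d, hd, C, hC, rfl⟩
    exact hC.1.diff
  have hAne : ∀ A ∈ Hfam, A.Nonempty := by
    rintro A ⟨d, hd, C, hC, rfl⟩
    rw [Set.nonempty_iff_ne_empty]
    intro hemp
    exact hbad d hd C hC (Set.diff_eq_empty.mp hemp)
  have hdir : ∀ A ∈ Hfam, ∀ B ∈ Hfam, ∃ C ∈ Hfam,
      upset T C ⊆ upset T A ∧ upset T C ⊆ upset T B := by
    rintro A ⟨d1, hd1, C1, hC1, rfl⟩ B ⟨d2, hd2, C2, hC2, rfl⟩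
    obtain ⟨d3, hd3, h13, h23⟩ := hD.2 d1 hd1 d2 hd2
    obtain ⟨C3, hC3, hsub1, hsub2⟩ :=
      (hq d3).1.2.2 C1 (finD_mono h13 hC1) C2 (finD_mono h23 hC2)
    exact ⟨C3 \ upset T G, ⟨d3, hd3, C3, hC3, rfl⟩,
      diff_upset_mono hsub1, diff_upset_mono hsub2⟩
  obtain ⟨M, hMne, hMdir, hMmeet, hMsub⟩ := rudin T Hfam hne hfin hAne hdir
  have hMz : DConv T M z := by
    intro U hU hzU
    obtain ⟨d, hdD, hdU⟩ := hDz U hU hzU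
    obtain ⟨C, hC, hCU⟩ := (hq d).2 U hU hdU
    obtain ⟨e, heM, heC⟩ := hMmeet (C \ upset T G) ⟨d, hdD, C, hC, rfl⟩
    exact ⟨e, heM, hCU (subset_upset T C heC.1)⟩
  obtain ⟨m, hmM, hmG⟩ := hG M z ⟨hMne, hMdir⟩ hMz rfl
  obtain ⟨A, hAH, hmA⟩ := hMsub hmM
  obtain ⟨d, hd, C, hC, rfl⟩ := hAH
  exact hmA.2 hmG

lemma single_dir (T : Set (Set X)) (z : X) : IsDirSet T {z} ∧ DConv T {z} z := by
  refine ⟨⟨⟨z, rfl⟩, ?_⟩, fun U hU hzU => ⟨z, rfl, hzU⟩⟩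
  intro a ha b hb
  exact ⟨z, rfl, by rw [show a = z from ha]; exact sle_refl T z,
    by rw [show b = z from hb]; exact sle_refl T z⟩

lemma crux [TopologicalSpace X] (h : IsQuasicontinuousSpace X)
    {G : Set X} {x : X} (hG : SWayBelow (opens X) G {x}) :
    x ∈ interior (upset (opens X) G) := by
  obtain ⟨hdirT, hq⟩ := h
  set T : Set (Set X) := opens X with hT
  set V : Set X := {z | ∃ C, C ∈ finD T z ∧ C ⊆ upset T G} with hV
  have hVopen : IsOpen V := by
    apply hdirT
    intro E z hE hconv hzV
    obtain ⟨C0, hC0, hC0G⟩ := hzV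
    obtain ⟨d, hdE, C, hC, hCsub⟩ := keyL hq hE hconv hC0.2
    refine ⟨d, hdE, C, hC, fun c hc => ?_⟩
    obtain ⟨c0, hc0, hc0c⟩ := hCsub hc
    exact mem_upset_trans (hC0G hc0) hc0c
  have hxV : x ∈ V := by
    obtain ⟨d, hd, C, hC, hCG⟩ := keyL hq (single_dir T x).1 (single_dir T x).2 hG
    rw [show d = x from hd] at hC
    exact ⟨C, hC, hCG⟩
  have hVsub : V ⊆ upset T G := by
    rintro z ⟨C, hC, hCG⟩
    obtain ⟨w, hw, hwup⟩ := hC.2 {z} z (single_dir T z).1 (single_dir T z).2 rfl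
    rw [show w = z from hw] at hwup
    obtain ⟨c, hcC, hcz⟩ := hwup
    exact mem_upset_trans (hCG hcC) hcz
  exact interior_maximal hVsub hVopen hxV


theorem stmt11 (X : Type) [TopologicalSpace X] [T0Space X]
    (h : IsQuasicontinuousSpace X) :
    (∀ U : Set X, IsOpen U → ∀ x ∈ U, ∃ F : Set X, F.Finite ∧
        x ∈ interior (upset (opens X) F) ∧ interior (upset (opens X) F) ⊆ U) ∧
    (∀ G H : Set X, SWayBelow (opens X) G H ↔ H ⊆ interior (upset (opens X) G)) := by
  constructor
  · intro U hU x hxU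
    obtain ⟨A, hA, hAU⟩ := (h.2 x).2 U hU hxU
    exact ⟨A, hA.1, crux h hA.2, interior_subset.trans hAU⟩
  · intro G H
    constructor
    · intro hGH z hz
      exact crux h (fun D x hD hconv hx =>
        hGH D x hD hconv (by rw [show x = z from hx]; exact hz))
    · intro hsub D x hD hconv hxH
      obtain ⟨e, heD, heI⟩ := hconv (interior (upset (opens X) G)) isOpen_interior (hsub hxH)
      exact ⟨e, heD, interior_subset heI⟩


end Conv
end
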